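/- Let n ≥ 1 be an integer and κ_s, κ_o, κ_d reals with κ_d ≥ 0, κ_o ≥ κ_d, and κ_s − κ_d ≥ 2(κ_o − κ_d). Let K be the matrix indexed by ordered pairs (j,k) with j, k ∈ {1,…,n} defined by K_{(j,k),(j',k')} = κ_s if (j,k) = (j',k'), K_{(j,k),(j',k')} = κ_o if exactly one of j = j', k = k' holds, and K_{(j,k),(j',k')} = κ_d otherwise. Then K = Z·Zᵀ, where Z is the matrix whose row indexed by (j,k) is the concatenation (s₁·e_j, s₁·e_k, s₂·e_{(j,k)}, s₀) with e_j ∈ ℝⁿ and e_{(j,k)} ∈ ℝ^{n²} standard basis vectors, s₀ := √κ_d, s₁ := √(κ_o − κ_d), s₂ := √(κ_s − κ_d − 2(κ_o − κ_d)). In particular, every such exchangeable kernel matrix K is positive semidefinite. -/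
import Mathlib


open Matrix

noncomputable section

/-- The exchangeable kernel matrix on all ordered pairs of `n` items. -/
def Kex (n : ℕ) (κs κo κd : ℝ) : Matrix (Fin n × Fin n) (Fin n × Fin n) ℝ :=
  fun u u' =>
    if u = u' then κs else if u.1 = u'.1 ∨ u.2 = u'.2 then κo else κd

/-- The four-hot encoding: compositional populations scaled by `s₁ = √(κₒ−κ_d)`,
conjunctive population scaled by `s₂ = √(κₛ−κ_d−2(κₒ−κ_d))`, and a constant bias
unit `s₀ = √κ_d`. -/
def Zfourhot (n : ℕ) (κs κo κd : ℝ) :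
    Matrix (Fin n × Fin n) (Fin n ⊕ Fin n ⊕ (Fin n × Fin n) ⊕ Unit) ℝ :=
  fun u v =>
    match v with
    | Sum.inl i => Real.sqrt (κo - κd) * (if i = u.1 then 1 else 0)
    | Sum.inr (Sum.inl i) => Real.sqrt (κo - κd) * (if i = u.2 then 1 else 0)
    | Sum.inr (Sum.inr (Sum.inl w)) =>
        Real.sqrt (κs - κd - 2 * (κo - κd)) * (if w = u then 1 else 0)
    | Sum.inr (Sum.inr (Sum.inr _)) => Real.sqrt κd

/-- Every exchangeable kernel matrix factors as `Z·Zᵀ` through the four-hot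
encoding; in particular it is positive semidefinite. -/
theorem exchangeable_kernel_factorization
    (n : ℕ) (hn : 1 ≤ n) (κs κo κd : ℝ)
    (hκd : 0 ≤ κd) (hκo : κd ≤ κo) (hκs : 2 * (κo - κd) ≤ κs - κd) :
    Kex n κs κo κd = Zfourhot n κs κo κd * (Zfourhot n κs κo κd)ᵀ ∧
      (Kex n κs κo κd).PosSemidef := by
  have s1 : Real.sqrt (κo - κd) * Real.sqrt (κo - κd) = κo - κd :=
    Real.mul_self_sqrt (by linarith)
  have s2 : Real.sqrt (κs - κd - 2 * (κo - κd)) * Real.sqrt (κs - κd - 2 * (κo - κd))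
      = κs - κd - 2 * (κo - κd) := Real.mul_self_sqrt (by linarith)
  have s0 : Real.sqrt κd * Real.sqrt κd = κd := Real.mul_self_sqrt hκd
  have hfac : Kex n κs κo κd = Zfourhot n κs κo κd * (Zfourhot n κs κo κd)ᵀ := by
    ext u u'
    simp only [Matrix.mul_apply, Matrix.transpose_apply, Fintype.sum_sum_type, Zfourhot]
    rw [Finset.sum_const, Finset.card_univ]
    have e1 : ∀ (a b : Fin n),
        (∑ i : Fin n, (Real.sqrt (κo - κd) * (if i = a then 1 else 0)) *
          (Real.sqrt (κo - κd) * (if i = b then 1 else 0)))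
        = if a = b then κo - κd else 0 := by
      intro a b
      rw [Finset.sum_eq_single a]
      · rcases eq_or_ne a b with hab | hab
        · simp [hab, s1]
        · simp [hab]
      · intro i _ hi; simp [hi]
      · simp
    have e2 : (∑ w : Fin n × Fin n,
          (Real.sqrt (κs - κd - 2 * (κo - κd)) * (if w = u then 1 else 0)) *
          (Real.sqrt (κs - κd - 2 * (κo - κd)) * (if w = u' then 1 else 0)))
        = if u = u' then κs - κd - 2 * (κo - κd) else 0 := by
      rw [Finset.sum_eq_single u]
      · rcases eq_or_ne u u' with huu | huu
        · simp [huu, s2]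
        · simp [huu]
      · intro i _ hi; simp [hi]
      · simp
    rw [e1, e1, e2]
    simp only [Fintype.card_unit, one_smul, Kex]
    rcases eq_or_ne u u' with h | h
    · subst h; simp [s0]; ring
    · simp only [if_neg h]
      rcases eq_or_ne u.1 u'.1 with h1 | h1 <;> rcases eq_or_ne u.2 u'.2 with h2 | h2
      · exact absurd (Prod.ext h1 h2) h
      · simp [h1, h2, s0, h]; try ring
      · simp [h1, h2, s0, h]; try ring
      · simp [h1, h2, s0, h]
  refine ⟨hfac, ?_⟩
  rw [hfac]
  exact Matrix.posSemidef_self_mul_conjTranspose _
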